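/- Let p be a prime, R the ring of integers of a finite ramified extension of ℚ_p with residue field R̄ = R/(tR) where t is a prime element, and G = ⟨a | a^p = 1⟩. For 1 ≤ j < d (d the ramification index) and 1 ≤ i < p, the reduction X̄_{ji} = X_{ji}/(t X_{ji}) of X_{ji} = t^j RG + (a-1)^i RG is isomorphic as an R̄G-module to V_i ⊕ V_{p-i}, where V_k = R̄G/((a-1)^k R̄G). -/

import Mathlib

set_option maxHeartbeats 1000000
set_option synthInstance.maxHeartbeats 1000000

open Polynomial


-- ℤ identity
lemma int_poly_identity (p : ℕ) [Fact p.Prime] :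
    ∃ h : ℤ[X], (X - 1) ^ p - (X ^ p - 1) = C (p : ℤ) * ((X - 1) * h) := by
  have hp : Fact p.Prime := inferInstance
  set D : ℤ[X] := (X - 1) ^ p - (X ^ p - 1) with hD
  have hdvd : C (p : ℤ) ∣ D := by
    rw [C_dvd_iff_dvd_coeff]
    intro n
    have hmap : D.map (Int.castRingHom (ZMod p)) = 0 := by
      have : ((X - 1 : ℤ[X]).map (Int.castRingHom (ZMod p))) = X - 1 := by
        simp
      simp only [hD, Polynomial.map_sub, Polynomial.map_pow, Polynomial.map_one, map_X]
      rw [sub_pow_char]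
      ring
    have := congrArg (fun q => Polynomial.coeff q n) hmap
    simp only [coeff_map, coeff_zero] at this
    exact_mod_cast (ZMod.intCast_zmod_eq_zero_iff_dvd _ _).mp this
  obtain ⟨q, hq⟩ := hdvd
  have hroot : q.IsRoot 1 := by
    have h1 : D.eval 1 = 0 := by simp [hD, hp.out.ne_zero]
    rw [hq] at h1
    simp only [eval_mul, eval_C] at h1
    have hpne : (p : ℤ) ≠ 0 := Nat.cast_ne_zero.mpr hp.out.ne_zero
    exact (mul_eq_zero.mp h1).resolve_left hpne
  obtain ⟨h, hh⟩ := (dvd_iff_isRoot (p := q) (a := 1)).mpr hroot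
  refine ⟨h, ?_⟩
  rw [hq, hh]
  simp [map_one]

section MA
variable (p : ℕ) [Fact p.Prime] (S : Type*) [CommRing S]

local notation "G" => Multiplicative (ZMod p)
local notation "A" => MonoidAlgebra S (Multiplicative (ZMod p))

noncomputable def aelt : MonoidAlgebra S (Multiplicative (ZMod p)) :=
  MonoidAlgebra.of S (Multiplicative (ZMod p)) (Multiplicative.ofAdd 1)

lemma aelt_pow (n : ℕ) :
    (aelt p S) ^ n = MonoidAlgebra.single (Multiplicative.ofAdd (n : ZMod p)) 1 := by
  rw [aelt, ← map_pow, MonoidAlgebra.of_apply]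
  congr 1
  rw [← ofAdd_nsmul]
  congr 1
  simp [nsmul_eq_mul]

lemma aelt_pow_p : (aelt p S) ^ p = 1 := by
  rw [aelt_pow]
  simp only [ZMod.natCast_self, ofAdd_zero]
  exact (MonoidAlgebra.one_def).symm

lemma aeval_aelt_surj : Function.Surjective (Polynomial.aeval (aelt p S) : S[X] → A) := by
  intro x
  induction x using MonoidAlgebra.induction_on with
  | of g =>
    refine ⟨X ^ (g.toAdd.val), ?_⟩
    rw [map_pow, aeval_X, aelt_pow]
    have : ((g.toAdd.val : ZMod p)) = g.toAdd := by
      simp [ZMod.natCast_val, ZMod.cast_id]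
    rw [this, MonoidAlgebra.of_apply]
    simp
  | add f g hf hg =>
    obtain ⟨F, rfl⟩ := hf; obtain ⟨Gg, rfl⟩ := hg
    exact ⟨F + Gg, map_add _ _ _⟩
  | smul r f hf =>
    obtain ⟨F, rfl⟩ := hf
    refine ⟨C r * F, ?_⟩
    rw [map_mul, aeval_C, ← Algebra.smul_def]

lemma aeval_aelt_ker [Nontrivial S] {F : S[X]} (hF : Polynomial.aeval (aelt p S) F = 0) :
    ∃ Q : S[X], F = (X ^ p - 1) * Q := by
  have hp : Fact p.Prime := inferInstance
  have hmonic : (X ^ p - 1 : S[X]).Monic := by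
    have := monic_X_pow_sub_C (1 : S) hp.out.ne_zero
    simpa using this
  refine ⟨F /ₘ (X ^ p - 1), ?_⟩
  have hdiv := modByMonic_add_div F (X ^ p - 1)
  set r := F %ₘ (X ^ p - 1) with hr
  have hdeg : r.degree < (p : WithBot ℕ) := by
    have := degree_modByMonic_lt F hmonic
    rwa [show ((X ^ p - 1 : S[X])).degree = (p : WithBot ℕ) by
      have := degree_X_pow_sub_C (n := p) hp.out.pos (1 : S)
      simpa using this] at this
  have hndeg : r.natDegree < p := by
    rcases eq_or_ne r 0 with h0 | h0
    · simpa [h0] using hp.out.pos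
    · exact natDegree_lt_iff_degree_lt h0 |>.mpr (by exact_mod_cast hdeg)
  have haev : Polynomial.aeval (aelt p S) r = 0 := by
    have : Polynomial.aeval (aelt p S) ((X ^ p - 1 : S[X]) * (F /ₘ (X ^ p - 1))) = 0 := by
      rw [map_mul]
      have : Polynomial.aeval (aelt p S) (X ^ p - 1 : S[X]) = 0 := by
        rw [map_sub, map_pow, aeval_X, map_one, aelt_pow_p, sub_self]
      rw [this, zero_mul]
    have h2 := congrArg (Polynomial.aeval (aelt p S)) hdiv
    rw [map_add, this, add_zero] at h2
    rw [h2, hF]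
  -- now show r = 0
  have hsum := aeval_eq_sum_range' hndeg (aelt p S)
  rw [haev] at hsum
  have hcoeff : ∀ m, m < p → r.coeff m = 0 := by
    intro m hm
    have happ := congrArg (fun z : MonoidAlgebra S (Multiplicative (ZMod p)) =>
      z.coeff (Multiplicative.ofAdd (m : ZMod p))) hsum.symm
    simp only [MonoidAlgebra.coeff_zero, Finsupp.coe_zero, Pi.zero_apply] at happ
    rw [MonoidAlgebra.coeff_sum, Finset.sum_apply'] at happ
    have : ∀ n ∈ Finset.range p, n ≠ m →
        ((r.coeff n • (aelt p S) ^ n).coeff (Multiplicative.ofAdd (m : ZMod p))) = 0 := by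
      intro n hn hnm
      rw [aelt_pow]
      rw [MonoidAlgebra.coeff_smul_apply, MonoidAlgebra.coeff_single, Finsupp.single_apply]
      have : ¬ (Multiplicative.ofAdd ((n : ZMod p)) = Multiplicative.ofAdd ((m : ZMod p))) := by
        intro h
        apply hnm
        have := Multiplicative.ofAdd.injective h
        have h2 : (n : ZMod p) = (m : ZMod p) := this
        have := (ZMod.natCast_eq_natCast_iff n m p).mp h2
        exact Nat.ModEq.eq_of_lt_of_lt this (Finset.mem_range.mp hn) hm
      rw [if_neg this, smul_zero]
    rw [Finset.sum_eq_single m (fun n hn hnm => this n hn hnm)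
      (fun hm' => absurd (Finset.mem_range.mpr hm) hm')] at happ
    rw [aelt_pow, MonoidAlgebra.coeff_smul_apply, MonoidAlgebra.coeff_single, Finsupp.single_apply, if_pos rfl, smul_eq_mul,
      mul_one] at happ
    exact happ
  have hr0 : r = 0 := by
    ext n
    rcases lt_or_ge n p with h | h
    · simpa using hcoeff n h
    · simp [coeff_eq_zero_of_natDegree_lt (lt_of_lt_of_le hndeg h)]
  rw [hr0, zero_add] at hdiv
  exact hdiv.symm

lemma pi_pow_eq : ∃ c : MonoidAlgebra S (Multiplicative (ZMod p)),
    (aelt p S - 1) ^ p = (p : MonoidAlgebra S (Multiplicative (ZMod p))) * ((aelt p S - 1) * c) := by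
  obtain ⟨h, hh⟩ := int_poly_identity p
  refine ⟨Polynomial.aeval (aelt p S) h, ?_⟩
  have h2 := congrArg (Polynomial.aeval (aelt p S)) hh
  simp only [map_sub, map_pow, map_mul, aeval_X, map_one, aeval_C] at h2
  rw [aelt_pow_p, sub_self, sub_zero] at h2
  rw [h2]
  norm_num

lemma struct_lemma [Nontrivial S] (t : S) (hpt : (p : S) ∈ Ideal.span {t})
    {k : ℕ} (hk : k ≤ p) (W : MonoidAlgebra S (Multiplicative (ZMod p)))
    (hW : W * (aelt p S - 1) ^ k ∈
      Ideal.span {algebraMap S (MonoidAlgebra S (Multiplicative (ZMod p))) t}) :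
    W ∈ Ideal.span {algebraMap S (MonoidAlgebra S (Multiplicative (ZMod p))) t,
      (aelt p S - 1) ^ (p - k)} := by
  obtain ⟨F, rfl⟩ := aeval_aelt_surj p S W
  rw [Ideal.mem_span_singleton'] at hW
  obtain ⟨z, hz⟩ := hW
  obtain ⟨Gz, rfl⟩ := aeval_aelt_surj p S z
  have h0 : Polynomial.aeval (aelt p S) (F * (X - 1) ^ k - C t * Gz) = 0 := by
    simp only [map_sub, map_mul, map_pow, aeval_X, map_one, aeval_C]
    rw [sub_eq_zero, ← hz]
    ring
  obtain ⟨Q, hQ⟩ := aeval_aelt_ker p S h0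
  set Sbar := S ⧸ Ideal.span {t}
  let q : S →+* Sbar := Ideal.Quotient.mk (Ideal.span {t})
  have hqt : q t = 0 := Ideal.Quotient.eq_zero_iff_mem.mpr (Ideal.subset_span rfl)
  have hqp : (X ^ p - 1 : Sbar[X]) = (X - 1) ^ p := by
    obtain ⟨h, hh⟩ := int_poly_identity p
    have h3 := congrArg (Polynomial.map (Int.castRingHom Sbar)) hh
    simp only [Polynomial.map_sub, Polynomial.map_pow, Polynomial.map_one, map_X,
      Polynomial.map_mul, map_C] at h3
    have hp0 : ((p : ℕ) : Sbar) = 0 := by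
      have : ((p : ℕ) : Sbar) = q ((p : ℕ) : S) := by simp [q]
      rw [this, Ideal.Quotient.eq_zero_iff_mem]
      exact hpt
    rw [map_natCast, hp0] at h3
    simp only [map_zero, zero_mul] at h3
    linear_combination -h3
  have hmap := congrArg (Polynomial.map q) hQ
  simp only [Polynomial.map_sub, Polynomial.map_mul, Polynomial.map_pow, Polynomial.map_one,
    map_X, map_C, hqt, Polynomial.C_0, zero_mul, sub_zero] at hmap
  rw [hqp] at hmap
  have hsplit : ((X : Sbar[X]) - 1) ^ p = (X - 1) ^ k * (X - 1) ^ (p - k) := by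
    rw [← pow_add]
    congr 1
    omega
  rw [hsplit] at hmap
  have hmonic : ((X : Sbar[X]) - 1).Monic := by
    have := monic_X_sub_C (1 : Sbar)
    simpa using this
  have hcancel : F.map q = (X - 1) ^ (p - k) * Q.map q := by
    have hreg := (hmonic.pow k).isRegular.left
    apply hreg
    calc (X - 1) ^ k * F.map q = F.map q * (X - 1) ^ k := by ring
    _ = (X - 1) ^ k * (X - 1) ^ (p - k) * Q.map q := hmap
    _ = (X - 1) ^ k * ((X - 1) ^ (p - k) * Q.map q) := by ring
  have hker : (F - (X - 1) ^ (p - k) * Q).map q = 0 := by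
    simp only [Polynomial.map_sub, Polynomial.map_mul, Polynomial.map_pow, Polynomial.map_one,
      map_X]
    rw [hcancel]
    ring
  have hdvd : C t ∣ (F - (X - 1) ^ (p - k) * Q) := by
    rw [C_dvd_iff_dvd_coeff]
    intro n
    rw [← Ideal.mem_span_singleton, ← Ideal.Quotient.eq_zero_iff_mem]
    have h5 := congrArg (fun z : Sbar[X] => z.coeff n) hker
    simp only [coeff_zero] at h5
    rw [coeff_map] at h5
    exact h5
  obtain ⟨E, hE⟩ := hdvd
  have hFE : F = C t * E + (X - 1) ^ (p - k) * Q := by linear_combination hE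
  have haev := congrArg (Polynomial.aeval (aelt p S)) hFE
  simp only [map_add, map_mul, map_pow, map_sub, aeval_X, map_one, aeval_C] at haev
  rw [Ideal.mem_span_pair]
  exact ⟨Polynomial.aeval (aelt p S) E, Polynomial.aeval (aelt p S) Q, by
    rw [haev]; ring⟩

end MA

section Main
variable (p : ℕ) [Fact p.Prime] (S : Type*) [CommRing S] [IsDomain S]

-- cancellation of t
lemma tau_cancel (t : S) (ht0 : t ≠ 0) (x y : MonoidAlgebra S (Multiplicative (ZMod p)))
    (h : algebraMap S (MonoidAlgebra S (Multiplicative (ZMod p))) t * x =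
      algebraMap S (MonoidAlgebra S (Multiplicative (ZMod p))) t * y) : x = y := by
  rw [← Algebra.smul_def, ← Algebra.smul_def] at h
  ext g
  have h2 : (t • x).coeff g = (t • y).coeff g := by rw [h]
  rw [MonoidAlgebra.coeff_smul_apply, MonoidAlgebra.coeff_smul_apply, smul_eq_mul, smul_eq_mul] at h2
  exact mul_left_cancel₀ ht0 h2

local notation "AA" => MonoidAlgebra S (Multiplicative (ZMod p))

theorem main_aux (t θ : S) (ht0 : t ≠ 0) (d : ℕ) (hp : (p : S) = t ^ d * θ)
    (j i : ℕ) (hj1 : 1 ≤ j) (hjd : j < d) (hip : i < p) :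
    Nonempty ((Submodule.map (Ideal.span {algebraMap S AA t} *
        Ideal.span {algebraMap S AA (t ^ j), (aelt p S - 1) ^ i}).mkQ
        (Ideal.span {algebraMap S AA (t ^ j), (aelt p S - 1) ^ i})) ≃ₗ[AA]
      (AA ⧸ Ideal.span {algebraMap S AA t, (aelt p S - 1) ^ i}) ×
      (AA ⧸ Ideal.span {algebraMap S AA t, (aelt p S - 1) ^ (p - i)})) := by
  set A := MonoidAlgebra S (Multiplicative (ZMod p)) with hAdef
  obtain ⟨j', rfl⟩ : ∃ j', j = j' + 1 := ⟨j - 1, by omega⟩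
  set X : Ideal A := Ideal.span {algebraMap S A (t ^ (j' + 1)), (aelt p S - 1) ^ i} with hXdef
  set tX : Ideal A := Ideal.span {algebraMap S A t} * X with htXdef
  set τ : A := algebraMap S A t with hτdef
  set π : A := aelt p S - 1 with hπdef
  set θ' : A := algebraMap S A θ with hθdef
  set g1 : A := algebraMap S A (t ^ (j' + 1)) with hg1def
  have hg1 : g1 = τ ^ (j' + 1) := by rw [hg1def, map_pow]
  have hpow : ∀ (x : A) (m n k : ℕ), m = n + k → x ^ m = x ^ n * x ^ k := by
    intro x m n k h
    rw [h, pow_add]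
  obtain ⟨c, hc⟩ := pi_pow_eq p S
  have hpA : ((p : ℕ) : A) = τ ^ d * θ' := by
    rw [← map_natCast (algebraMap S A) p, hp, map_mul, map_pow]
  have hππ : π ^ p = τ ^ d * θ' * (π * c) := by
    linear_combination hc + (π * c) * hpA
  have hππ1 : π ^ p = τ * (τ ^ (d - 1) * θ' * (π * c)) := by
    rw [hππ, hpow τ d 1 (d - 1) (by omega), pow_one]
    ring
  have hsplit : π ^ (p - i) * π ^ i = π ^ p := (hpow π p (p - i) i (by omega)).symm
  have hpt : ((p : ℕ) : S) ∈ Ideal.span {t} := by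
    rw [Ideal.mem_span_singleton, hp]
    exact dvd_mul_of_dvd_left (dvd_pow_self t (by omega)) _
  -- membership facts
  have hτX : τ ∈ Ideal.span ({τ} : Set A) := Ideal.subset_span rfl
  have hg1X : g1 ∈ X := Ideal.subset_span (by left; rfl)
  have hπiX : π ^ i ∈ X := Ideal.subset_span (by right; rfl)
  have m1 : τ * g1 ∈ tX := Ideal.mul_mem_mul hτX hg1X
  have m3 : τ * π ^ i ∈ tX := Ideal.mul_mem_mul hτX hπiX
  have m2 : π ^ i * g1 ∈ tX := by
    have heq : π ^ i * g1 = τ * (algebraMap S A (t ^ j') * π ^ i) := by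
      rw [hg1, hτdef, map_pow]
      ring
    rw [heq]
    exact Ideal.mul_mem_mul hτX (X.mul_mem_left _ hπiX)
  have m4 : π ^ (p - i) * π ^ i ∈ tX := by
    have heq : π ^ (p - i) * π ^ i = τ * (τ ^ (d - 1 - (j' + 1)) * θ' * (π * c) * g1) := by
      rw [hsplit, hππ1, hg1]
      rw [hpow τ (d - 1) (d - 1 - (j' + 1)) (j' + 1) (by omega)]
      ring
    rw [heq]
    exact Ideal.mul_mem_mul hτX (X.mul_mem_left _ hg1X)
  -- the two descended maps
  have h1 : Ideal.span {τ, π ^ i} ≤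
      LinearMap.ker (tX.mkQ.comp (LinearMap.toSpanSingleton A A g1)) := by
    rw [Ideal.span_le]
    rintro x (rfl | rfl)
    · rw [SetLike.mem_coe, LinearMap.mem_ker, LinearMap.comp_apply,
        LinearMap.toSpanSingleton_apply, smul_eq_mul, Submodule.mkQ_apply,
        Submodule.Quotient.mk_eq_zero]
      exact m1
    · rw [SetLike.mem_coe, LinearMap.mem_ker, LinearMap.comp_apply,
        LinearMap.toSpanSingleton_apply, smul_eq_mul, Submodule.mkQ_apply,
        Submodule.Quotient.mk_eq_zero]
      exact m2
  have h2 : Ideal.span {τ, π ^ (p - i)} ≤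
      LinearMap.ker (tX.mkQ.comp (LinearMap.toSpanSingleton A A (π ^ i))) := by
    rw [Ideal.span_le]
    rintro x (rfl | rfl)
    · rw [SetLike.mem_coe, LinearMap.mem_ker, LinearMap.comp_apply,
        LinearMap.toSpanSingleton_apply, smul_eq_mul, Submodule.mkQ_apply,
        Submodule.Quotient.mk_eq_zero]
      exact m3
    · rw [SetLike.mem_coe, LinearMap.mem_ker, LinearMap.comp_apply,
        LinearMap.toSpanSingleton_apply, smul_eq_mul, Submodule.mkQ_apply,
        Submodule.Quotient.mk_eq_zero]
      exact m4
  let f1 := Submodule.liftQ (Ideal.span {τ, π ^ i})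
    (tX.mkQ.comp (LinearMap.toSpanSingleton A A g1)) h1
  let f2 := Submodule.liftQ (Ideal.span {τ, π ^ (p - i)})
    (tX.mkQ.comp (LinearMap.toSpanSingleton A A (π ^ i))) h2
  let F := f1.coprod f2
  -- range
  have hrange : LinearMap.range F = Submodule.map tX.mkQ X := by
    rw [LinearMap.range_coprod]
    show LinearMap.range f1 ⊔ LinearMap.range f2 = _
    rw [Submodule.range_liftQ, Submodule.range_liftQ, LinearMap.range_comp,
      LinearMap.range_comp, ← LinearMap.span_singleton_eq_range,
      ← LinearMap.span_singleton_eq_range, ← Submodule.map_sup]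
    congr 1
    show _ = X
    rw [show (X : Ideal A) = Ideal.span {g1, π ^ i} from rfl, Ideal.span_insert]
  -- key injectivity computation
  -- S2 inner induction lemma
  have S2 : ∀ m : ℕ, m + 2 ≤ d → ∀ U : A, U * τ ^ m ∈ Ideal.span {π ^ i, τ ^ (m + 1)} →
      U ∈ Ideal.span {τ, π ^ i} := by
    intro m
    induction m with
    | zero =>
      intro _ U hU
      rw [pow_zero, mul_one, pow_one] at hU
      rwa [Ideal.span_pair_comm] at hU
    | succ m ih =>
      intro hm U hU
      obtain ⟨γ', δ', hγδ'⟩ := Ideal.mem_span_pair.mp hU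
      have hγ'mem : γ' * π ^ i ∈ Ideal.span ({τ} : Set A) := by
        rw [Ideal.mem_span_singleton']
        exact ⟨U * τ ^ m - δ' * τ ^ (m + 1), by linear_combination -hγδ'⟩
      have hγ' := struct_lemma p S t hpt hip.le γ' hγ'mem
      obtain ⟨e, f, hef⟩ := Ideal.mem_span_pair.mp hγ'
      have e2 : τ * (U * τ ^ m) =
          τ * (e * π ^ i + f * (τ ^ (d - 1) * θ' * (π * c)) + δ' * τ ^ (m + 1)) := by
        linear_combination -hγδ' - (π ^ i) * hef + f * hsplit + f * hππ1
      have e3 := tau_cancel p S t ht0 _ _ e2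
      apply ih (by omega) U
      rw [Ideal.mem_span_pair]
      have hτs : τ ^ (d - 1) = τ ^ (d - 2 - m) * τ ^ (m + 1) :=
        hpow τ (d - 1) (d - 2 - m) (m + 1) (by omega)
      exact ⟨e, f * (τ ^ (d - 2 - m) * θ' * (π * c)) + δ', by
        rw [e3, hτs]; ring⟩
  have key : ∀ u v : A, u * g1 + v * π ^ i ∈ tX →
      u ∈ Ideal.span {τ, π ^ i} ∧ v ∈ Ideal.span {τ, π ^ (p - i)} := by
    intro u v h
    obtain ⟨s, hsX, hs⟩ := Ideal.mem_span_singleton_mul.mp h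
    obtain ⟨α, β, hαβ⟩ := Ideal.mem_span_pair.mp hsX
    set U : A := u - τ * α with hUdef
    set V : A := v - τ * β with hVdef
    have hUV : U * g1 + V * π ^ i = 0 := by
      rw [hUdef, hVdef]
      linear_combination - hs - τ * hαβ
    have hVmem : V * π ^ i ∈ Ideal.span ({τ} : Set A) := by
      rw [Ideal.mem_span_singleton']
      refine ⟨-(U * τ ^ j'), ?_⟩
      have : V * π ^ i = -(U * g1) := by linear_combination hUV
      rw [this, hg1]
      ring
    have hV := struct_lemma p S t hpt hip.le V hVmem
    constructor
    · -- u part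
      obtain ⟨γ, δ, hγδ⟩ := Ideal.mem_span_pair.mp hV
      have hUg : U * g1 = -(V * π ^ i) := by linear_combination hUV
      have e1 : τ * (U * τ ^ j') =
          τ * (-(γ * π ^ i) - δ * (τ ^ (d - 1) * θ' * (π * c))) := by
        rw [hg1] at hUg
        linear_combination hUg + (π ^ i) * hγδ - δ * hsplit - δ * hππ1
      have e1' := tau_cancel p S t ht0 _ _ e1
      have hUmem : U * τ ^ j' ∈ Ideal.span {π ^ i, τ ^ (j' + 1)} := by
        rw [Ideal.mem_span_pair]
        have hτs : τ ^ (d - 1) = τ ^ (d - 1 - (j' + 1)) * τ ^ (j' + 1) :=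
          hpow τ (d - 1) (d - 1 - (j' + 1)) (j' + 1) (by omega)
        exact ⟨-γ, -(δ * (τ ^ (d - 1 - (j' + 1)) * θ' * (π * c))), by
          rw [e1', hτs]; ring⟩
      have hU := S2 j' (by omega) U hUmem
      have : u = U + τ * α := by rw [hUdef]; ring
      rw [this]
      exact Ideal.add_mem _ hU
        (Ideal.mul_mem_right _ _ (Ideal.subset_span (by left; rfl)))
    · have : v = V + τ * β := by rw [hVdef]; ring
      rw [this]
      exact Ideal.add_mem _ hV
        (Ideal.mul_mem_right _ _ (Ideal.subset_span (by left; rfl)))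
  -- injectivity
  have hinj : Function.Injective F := by
    rw [← LinearMap.ker_eq_bot]
    rw [eq_bot_iff]
    rintro ⟨z1, z2⟩ hz
    obtain ⟨u, rfl⟩ := Submodule.Quotient.mk_surjective _ z1
    obtain ⟨v, rfl⟩ := Submodule.Quotient.mk_surjective _ z2
    rw [LinearMap.mem_ker] at hz
    have hz' : tX.mkQ (u * g1 + v * π ^ i) = 0 := by
      rw [map_add]
      have : F (Submodule.Quotient.mk u, Submodule.Quotient.mk v) =
          tX.mkQ (u * g1) + tX.mkQ (v * π ^ i) := by
        show f1.coprod f2 _ = _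
        rw [LinearMap.coprod_apply, Submodule.liftQ_apply, Submodule.liftQ_apply]
        simp only [LinearMap.comp_apply, LinearMap.toSpanSingleton_apply, smul_eq_mul,
          Submodule.mkQ_apply]
      rw [← this, hz]
    rw [Submodule.mkQ_apply, Submodule.Quotient.mk_eq_zero] at hz'
    obtain ⟨hu, hv⟩ := key u v hz'
    rw [Submodule.mem_bot]
    have h1' : (Submodule.Quotient.mk u : A ⧸ (Ideal.span {τ, π ^ i} : Ideal A)) = 0 :=
      (Submodule.Quotient.mk_eq_zero _).mpr hu
    have h2' : (Submodule.Quotient.mk v : A ⧸ (Ideal.span {τ, π ^ (p - i)} : Ideal A)) = 0 :=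
      (Submodule.Quotient.mk_eq_zero _).mpr hv
    exact Prod.ext h1' h2'
  exact ⟨((LinearEquiv.ofInjective F hinj).trans (LinearEquiv.ofEq _ _ hrange)).symm⟩

end Main

/-- With `R` the ring of integers of a finite ramified extension
of `ℚ_p` (prime element `t`, ramification index `d`), `G = ⟨a | a^p = 1⟩`, and
`X_{ji} = t^j·RG + (a-1)^i·RG` for `1 ≤ j < d`, `1 ≤ i < p`, the reduction
`X̄_{ji} = X_{ji}/(t·X_{ji})` is isomorphic to `V_i ⊕ V_{p-i}` as a module over
`R̄G = RG/(t)`, where `V_k = R̄G/((ā-1)^k·R̄G)` is realized as the `RG`-module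
`RG/(t, (a-1)^k)` (and `X/tX` as the image of `X` in `RG/(t·X)`). -/
theorem stmt_11 (p : ℕ) [Fact p.Prime]
    (T : Type*) [Field T] [Algebra ℚ_[p] T] [FiniteDimensional ℚ_[p] T]
    [Algebra ℤ_[p] T] [IsScalarTower ℤ_[p] ℚ_[p] T]
    (R : Subalgebra ℤ_[p] T) (hR : R = integralClosure ℤ_[p] T)
    (t θ : ↥R) (ht : Irreducible t) (hθ : IsUnit θ)
    (d : ℕ) (hd : 1 < d) (hp : (p : ↥R) = t ^ d * θ)
    (j i : ℕ) (hj1 : 1 ≤ j) (hjd : j < d) (hi1 : 1 ≤ i) (hip : i < p) :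
    letI G := Multiplicative (ZMod p)
    letI a : MonoidAlgebra ↥R G := MonoidAlgebra.of ↥R G (Multiplicative.ofAdd 1)
    letI X : Ideal (MonoidAlgebra ↥R G) :=
      Ideal.span {algebraMap ↥R (MonoidAlgebra ↥R G) (t ^ j), (a - 1) ^ i}
    letI tX : Ideal (MonoidAlgebra ↥R G) :=
      Ideal.span {algebraMap ↥R (MonoidAlgebra ↥R G) t} * X
    letI Xbar : Submodule (MonoidAlgebra ↥R G) (MonoidAlgebra ↥R G ⧸ tX) :=
      Submodule.map tX.mkQ X
    letI Vi := MonoidAlgebra ↥R G ⧸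
      Ideal.span {algebraMap ↥R (MonoidAlgebra ↥R G) t, (a - 1) ^ i}
    letI Vpi := MonoidAlgebra ↥R G ⧸
      Ideal.span {algebraMap ↥R (MonoidAlgebra ↥R G) t, (a - 1) ^ (p - i)}
    Nonempty (↥Xbar ≃ₗ[MonoidAlgebra ↥R G] Vi × Vpi) := by
  exact main_aux p ↥R t θ ht.ne_zero d hp j i hj1 hjd hip
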